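/- Consider a gradient update step for the balanced two-layer model: given W₀ with W₀ = Q D_W Rᵀ and Σ = Q S Rᵀ for the same orthogonal (or orthonormal-column) frames Q, R and nonnegative diagonal D_W, S, the gradient-flow update direction −(W₀ − Σ)(W₀ᵀW₀)^{1/2} − (W₀W₀ᵀ)^{1/2}(W₀ − Σ) is also of the form Q D' Rᵀ for some diagonal D'. Hence joint diagonalizability with Σ is preserved by the dynamics. -/

import Mathlib

open Matrix

namespace Matrix.PosSemidef

open scoped ComplexOrder

/-- The positive semidefinite square root of a positive semidefinite matrix
(the definition removed from Mathlib, restated verbatim). -/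
noncomputable def sqrt {n 𝕜 : Type*} [Fintype n] [RCLike 𝕜] [DecidableEq n]
    {A : Matrix n n 𝕜} (hA : PosSemidef A) : Matrix n n 𝕜 :=
  hA.1.eigenvectorUnitary.1 * diagonal ((↑) ∘ (fun x : ℝ => Real.sqrt x) ∘ hA.1.eigenvalues) *
    (star hA.1.eigenvectorUnitary : Matrix n n 𝕜)

end Matrix.PosSemidef

theorem Matrix.PosSemidef.sqrt_eq_cfc' {n : Type*} [Fintype n] [DecidableEq n]
    {A : Matrix n n ℝ} (hA : A.PosSemidef) : hA.sqrt = cfc Real.sqrt A := by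
  rw [hA.1.cfc_eq]
  simp [Matrix.PosSemidef.sqrt, Matrix.IsHermitian.cfc, Unitary.conjStarAlgAut_apply, Function.comp_def]

theorem Matrix.PosSemidef.eq_sqrt_of_sq_eq {n : Type*} [Fintype n] [DecidableEq n]
    {A B : Matrix n n ℝ} (hB : B.PosSemidef) (hA : A.PosSemidef) (h : B ^ 2 = A) :
    B = hA.sqrt := by
  have hsa : IsSelfAdjoint B := hB.1
  rw [hA.sqrt_eq_cfc', ← h, ← cfc_comp_pow (f := Real.sqrt) (a := B) (n := 2)]
  conv_lhs => rw [← cfc_id ℝ B]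
  apply cfc_congr
  intro x hx
  obtain ⟨i, rfl⟩ := hB.1.spectrum_real_eq_range_eigenvalues ▸ hx
  simp [Real.sqrt_sq (hB.eigenvalues_nonneg i)]

/-- Joint diagonalizability is preserved by the balanced gradient-flow update:
if `W₀ = Q D_W Rᵀ` and `Σ = Q S Rᵀ` with orthonormal-column frames `Q, R` and
nonnegative diagonals `D_W, S`, then the update direction
`−(W₀ − Σ)(W₀ᵀW₀)^{1/2} − (W₀W₀ᵀ)^{1/2}(W₀ − Σ)` is of the form `Q D' Rᵀ` for a
diagonal `D'`; precisely, it equals `Q (2 D_W (S − D_W)) Rᵀ`. -/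
theorem joint_diagonalizability_preserved (dout di D : ℕ)
    (Q : Matrix (Fin dout) (Fin D) ℝ) (R : Matrix (Fin di) (Fin D) ℝ)
    (hQ : Qᵀ * Q = 1) (hR : Rᵀ * R = 1)
    (DW S : Fin D → ℝ) (hDW : ∀ k, 0 ≤ DW k) (hS : ∀ k, 0 ≤ S k)
    (W0 Sig : Matrix (Fin dout) (Fin di) ℝ)
    (hW0 : W0 = Q * Matrix.diagonal DW * Rᵀ)
    (hSig : Sig = Q * Matrix.diagonal S * Rᵀ)
    (h1 : (W0ᵀ * W0).PosSemidef) (h2 : (W0 * W0ᵀ).PosSemidef) :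
    (∃ D' : Fin D → ℝ,
      -(W0 - Sig) * h1.sqrt - h2.sqrt * (W0 - Sig) = Q * Matrix.diagonal D' * Rᵀ) ∧
    -(W0 - Sig) * h1.sqrt - h2.sqrt * (W0 - Sig)
      = Q * ((2 : ℝ) • (Matrix.diagonal DW * (Matrix.diagonal S - Matrix.diagonal DW))) * Rᵀ := by
  have cancelR : ∀ {m : Type} [Fintype m] (M : Matrix (Fin D) m ℝ), Rᵀ * (R * M) = M := by
    intro m _ M; rw [← Matrix.mul_assoc, hR, Matrix.one_mul]
  have cancelQ : ∀ {m : Type} [Fintype m] (M : Matrix (Fin D) m ℝ), Qᵀ * (Q * M) = M := by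
    intro m _ M; rw [← Matrix.mul_assoc, hQ, Matrix.one_mul]
  have hdiagPSD : (Matrix.diagonal DW).PosSemidef := .diagonal hDW
  have hBpsd : ((R * Matrix.diagonal DW) * Rᵀ).PosSemidef := by
    have := hdiagPSD.mul_mul_conjTranspose_same R
    simpa [Matrix.mul_assoc] using this
  have hCpsd : ((Q * Matrix.diagonal DW) * Qᵀ).PosSemidef := by
    have := hdiagPSD.mul_mul_conjTranspose_same Q
    simpa [Matrix.mul_assoc] using this
  have hsq1 : (R * Matrix.diagonal DW * Rᵀ) ^ 2 = W0ᵀ * W0 := by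
    rw [hW0, pow_two]
    simp only [Matrix.transpose_mul, Matrix.transpose_transpose,
      Matrix.diagonal_transpose, Matrix.mul_assoc, cancelR, cancelQ]
  have hsq2 : (Q * Matrix.diagonal DW * Qᵀ) ^ 2 = W0 * W0ᵀ := by
    rw [hW0, pow_two]
    simp only [Matrix.transpose_mul, Matrix.transpose_transpose,
      Matrix.diagonal_transpose, Matrix.mul_assoc, cancelR, cancelQ]
  have hs1 : h1.sqrt = R * Matrix.diagonal DW * Rᵀ :=
    (hBpsd.eq_sqrt_of_sq_eq h1 hsq1).symm
  have hs2 : h2.sqrt = Q * Matrix.diagonal DW * Qᵀ :=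
    (hCpsd.eq_sqrt_of_sq_eq h2 hsq2).symm
  have main : -(W0 - Sig) * h1.sqrt - h2.sqrt * (W0 - Sig)
      = Q * ((2 : ℝ) • (Matrix.diagonal DW * (Matrix.diagonal S - Matrix.diagonal DW))) * Rᵀ := by
    rw [hs1, hs2, hW0, hSig]
    rw [show Q * Matrix.diagonal DW * Rᵀ - Q * Matrix.diagonal S * Rᵀ
        = Q * (Matrix.diagonal DW - Matrix.diagonal S) * Rᵀ by
      rw [← Matrix.sub_mul, ← Matrix.mul_sub]]
    rw [show -(Q * (Matrix.diagonal DW - Matrix.diagonal S) * Rᵀ)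
        = Q * (Matrix.diagonal S - Matrix.diagonal DW) * Rᵀ by
      rw [← Matrix.neg_mul, ← Matrix.mul_neg, neg_sub]]
    have e1 : Q * (Matrix.diagonal S - Matrix.diagonal DW) * Rᵀ * (R * Matrix.diagonal DW * Rᵀ)
        = Q * ((Matrix.diagonal S - Matrix.diagonal DW) * Matrix.diagonal DW) * Rᵀ := by
      simp only [Matrix.mul_assoc, cancelR]
    have e2 : Q * Matrix.diagonal DW * Qᵀ * (Q * (Matrix.diagonal DW - Matrix.diagonal S) * Rᵀ)
        = Q * (Matrix.diagonal DW * (Matrix.diagonal DW - Matrix.diagonal S)) * Rᵀ := by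
      simp only [Matrix.mul_assoc, cancelQ]
    rw [e1, e2, ← Matrix.sub_mul, ← Matrix.mul_sub]
    congr 2
    ext i j
    simp only [Matrix.sub_mul, Matrix.mul_sub, Matrix.diagonal_mul_diagonal,
      Matrix.sub_apply, Matrix.smul_apply, Matrix.diagonal_apply, smul_eq_mul]
    split_ifs with h
    · ring
    · ring
  exact ⟨⟨fun k => 2 * (DW k * (S k - DW k)), by
    rw [main]; congr 2
    ext i j
    simp only [Matrix.mul_sub, Matrix.diagonal_mul_diagonal,
      Matrix.sub_apply, Matrix.smul_apply, Matrix.diagonal_apply, smul_eq_mul]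
    split_ifs with h
    · ring
    · ring⟩, main⟩
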